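/- arXiv:1309.7824 — 2 statements merged into one kernel-verified Lean document; each statement's English description precedes it below -/
import Mathlib

section
/- For a positive definite matrix A(λ) = Σ_{i=1}^n λ_i x_i x_iᵀ, the partial derivative of the squared Frobenius norm ‖A(λ)^{-1}‖_F² with respect to λ_i equals -2 x_iᵀ A(λ)^{-3} x_i. -/
open Matrix

attribute [local instance] Matrix.frobeniusNormedAddCommGroup Matrix.frobeniusNormedRing
  Matrix.frobeniusNormedSpace Matrix.frobeniusNormedAlgebra

/-- For `A(λ) = ∑ i, λ i • x i x iᵀ` positive definite, the partial derivative of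
`‖A(λ)⁻¹‖_F² = trace (A(λ)⁻¹ (A(λ)⁻¹)ᵀ)` with respect to `λ i` is `-2 x iᵀ A(λ)⁻³ x i`. -/
theorem stmt_1 {n d : ℕ} (x : Fin n → Fin d → ℝ) (lam : Fin n → ℝ)
    (A : (Fin n → ℝ) → Matrix (Fin d) (Fin d) ℝ)
    (hA : A = fun l => ∑ i, l i • vecMulVec (x i) (x i))
    (hpd : (A lam).PosDef) (i : Fin n) :
    HasDerivAt
      (fun t : ℝ => ((A (Function.update lam i t))⁻¹ * ((A (Function.update lam i t))⁻¹)ᵀ).trace)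
      (-2 * (x i ⬝ᵥ ((A lam)⁻¹ * (A lam)⁻¹ * (A lam)⁻¹) *ᵥ x i)) (lam i) := by
  classical
  set X : Matrix (Fin d) (Fin d) ℝ := vecMulVec (x i) (x i) with hX
  set C : Matrix (Fin d) (Fin d) ℝ := (A lam)⁻¹ with hC
  have hU : IsUnit (A lam) := (Matrix.isUnit_iff_isUnit_det _).mpr hpd.det_pos.ne'.isUnit
  have hself : A (Function.update lam i (lam i)) = A lam := by rw [Function.update_eq_self]
  -- B formula
  have hB : ∀ t : ℝ, A (Function.update lam i t) = A lam + (t - lam i) • X := by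
    intro t
    have key : ∀ c : ℝ, A (Function.update lam i c)
        = c • X + ∑ j ∈ Finset.univ \ {i}, lam j • vecMulVec (x j) (x j) := by
      intro c
      rw [hA]
      simp only
      have h1 : (fun j => Function.update lam i c j • vecMulVec (x j) (x j))
          = Function.update (fun j => lam j • vecMulVec (x j) (x j)) i (c • X) := by
        funext j
        by_cases h : j = i
        · subst h; simp [hX]
        · simp [Function.update_of_ne h]
      rw [h1, Finset.sum_update_of_mem (Finset.mem_univ i)]
    have hAl : A lam = lam i • X + ∑ j ∈ Finset.univ \ {i}, lam j • vecMulVec (x j) (x j) := by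
      have := key (lam i)
      simpa [Function.update_eq_self] using this
    rw [key t, hAl, sub_smul]
    abel
  have hBd : HasDerivAt (fun t : ℝ => A (Function.update lam i t)) X (lam i) := by
    have : HasDerivAt (fun t : ℝ => A lam + (t - lam i) • X) ((1:ℝ) • X) (lam i) :=
      (((hasDerivAt_id (lam i)).sub_const (lam i)).smul_const X).const_add (A lam)
    simpa [funext hB] using this
  -- derivative of inverse
  have hCu : (↑hU.unit⁻¹ : Matrix (Fin d) (Fin d) ℝ) = C := by
    rw [hC, Matrix.coe_units_inv, IsUnit.unit_spec]
  have hinv : HasDerivAt (fun t : ℝ => (A (Function.update lam i t))⁻¹) (-(C * X * C)) (lam i) := by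
    have hf : HasFDerivAt Ring.inverse
        (-ContinuousLinearMap.mulLeftRight ℝ _ (↑hU.unit⁻¹) (↑hU.unit⁻¹))
        (A (Function.update lam i (lam i))) := by
      rw [hself]; simpa using hasFDerivAt_ringInverse hU.unit
    have := hf.comp_hasDerivAt (lam i) hBd
    simp only [Function.comp_def, ContinuousLinearMap.neg_apply,
      ContinuousLinearMap.mulLeftRight_apply, hCu] at this
    simp only [← Matrix.nonsing_inv_eq_ringInverse, mul_assoc] at this ⊢
    exact this
  -- transpose
  have hinvT : HasDerivAt (fun t : ℝ => ((A (Function.update lam i t))⁻¹)ᵀ)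
      (-(C * X * C))ᵀ (lam i) := by
    have hφ := (LinearMap.toContinuousLinearMap
      ((Matrix.transposeLinearEquiv (Fin d) (Fin d) ℝ ℝ).toLinearMap)).hasFDerivAt
      (x := (A (Function.update lam i (lam i)))⁻¹)
    have := hφ.comp_hasDerivAt (lam i) hinv
    exact this
  -- product
  have hmul := hinv.mul hinvT
  rw [hself] at hmul
  -- trace
  have hfinal := ((LinearMap.toContinuousLinearMap
      (Matrix.traceLinearMap (Fin d) ℝ ℝ)).hasFDerivAt).comp_hasDerivAt (lam i) hmul
  simp only [Function.comp, LinearMap.coe_toContinuousLinearMap', Matrix.traceLinearMap_apply]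
    at hfinal
  convert hfinal using 1
  case e'_4 => rfl
  case e'_5 => rfl
  case e'_8 => rfl
  -- value computation
  have hXT : Xᵀ = X := by rw [hX]; ext a b; simp [vecMulVec_apply, mul_comm]
  have hCT : Cᵀ = C := by
    rw [hC, Matrix.transpose_nonsing_inv]
    congr 1
    have h := hpd.1
    rwa [Matrix.IsHermitian, conjTranspose_eq_transpose_of_trivial] at h
  have tkey : Matrix.trace (X * (C * C * C)) = x i ⬝ᵥ (C * C * C) *ᵥ x i := by
    rw [hX, Matrix.trace_mul_comm]
    simp only [Matrix.trace, Matrix.diag, Matrix.mul_apply, vecMulVec_apply, dotProduct,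
      Matrix.mulVec, Finset.mul_sum, Finset.sum_mul]
    refine Finset.sum_congr rfl fun a _ => Finset.sum_congr rfl fun b _ =>
      Finset.sum_congr rfl fun c _ => Finset.sum_congr rfl fun e _ => by ring
  change _ = Matrix.trace (-(C * X * C) * (A lam)⁻¹ᵀ + (A lam)⁻¹ * (-(C * X * C))ᵀ)
  rw [← hC, transpose_neg, transpose_mul, transpose_mul, hXT, hCT, Matrix.trace_add]
  simp only [neg_mul, mul_neg, Matrix.trace_neg]
  have e1 : Matrix.trace (C * X * C * C) = Matrix.trace (X * (C * C * C)) := by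
    rw [show C * X * C * C = (C * X) * (C * C) by noncomm_ring, Matrix.trace_mul_comm,
      show (C * C) * (C * X) = (C * C * C) * X by noncomm_ring, Matrix.trace_mul_comm]
  have e2 : Matrix.trace (C * (C * (X * C))) = Matrix.trace (X * (C * C * C)) := by
    rw [show C * (C * (X * C)) = (C * (C * X)) * C by noncomm_ring, Matrix.trace_mul_comm,
      show C * (C * (C * X)) = (C * C * C) * X by noncomm_ring, Matrix.trace_mul_comm]
  rw [e1, e2, tkey]; ring
end

section
/- Let T : ℝ^n → ℝ^n be continuous and order-reversing (λ ≤ λ' coordinatewise implies T(λ) ≥ T(λ') coordinatewise). If there exists λ* with T(λ*) ≤ √n λ* and T(√n λ*) = λ*, then T has a fixed point λ' with λ* ≤ λ' ≤ √n λ* (coordinatewise). -/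
open Metric Set MeasureTheory Topology Finset

set_option maxHeartbeats 1000000

noncomputable section

namespace Stmt16

lemma quadroot (a b c s t : ℝ) (hb : b ≠ 0) (hs : s^2 = a^2 + b*c) (ht : t = (-a + s)/b) :
    2*t*a + t^2*b = c := by
  subst ht; field_simp; linear_combination hs

section General
variable {F : Type*} [NormedAddCommGroup F] [NormedSpace ℝ F]



lemma det_one_add_pos [CompleteSpace F] (w : F →L[ℝ] F) (hw : ‖w‖ < 1) :
    0 < (ContinuousLinearMap.id ℝ F + w).det := by
  set ψ : ℝ → ℝ := fun s => (ContinuousLinearMap.id ℝ F + s • w).det with hψ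
  have hcont : Continuous ψ :=
    ContinuousLinearMap.continuous_det.comp (continuous_const.add (continuous_id.smul continuous_const))
  have hne : ∀ s ∈ Icc (0:ℝ) 1, ψ s ≠ 0 := by
    intro s hs
    have hsw : ‖-(s • w)‖ < 1 := by
      have h1 : ‖s • w‖ = ‖s‖ * ‖w‖ := norm_smul s w
      rw [norm_neg, h1, Real.norm_eq_abs, abs_of_nonneg hs.1]
      nlinarith [norm_nonneg w, hs.1, hs.2]
    have hunit : IsUnit (ContinuousLinearMap.id ℝ F + s • w) := by
      have := (Units.oneSub (-(s • w)) hsw).isUnit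
      simpa [ContinuousLinearMap.one_def, sub_neg_eq_add] using this
    have : IsUnit ((ContinuousLinearMap.id ℝ F + s • w) : F →ₗ[ℝ] F) :=
      hunit.map (ContinuousLinearMap.toLinearMapRingHom (R₁ := ℝ) (M₁ := F))
    exact (LinearMap.isUnit_det _ this).ne_zero
  have hψ0 : ψ 0 = 1 := by
    simp [hψ, ContinuousLinearMap.det, ContinuousLinearMap.one_def]
  have hψ1 : ψ 1 = (ContinuousLinearMap.id ℝ F + w).det := by simp [hψ]
  by_contra hle
  push_neg at hle
  rw [← hψ1] at hle
  have h1ne := hne 1 (by norm_num)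
  have hlt : ψ 1 < 0 := lt_of_le_of_ne hle h1ne
  have : (0:ℝ) ∈ Icc (ψ 1) (ψ 0) := by constructor <;> [linarith; linarith]
  obtain ⟨s, hs, hψs⟩ := intermediate_value_Icc' (by norm_num : (0:ℝ) ≤ 1) hcont.continuousOn this
  exact hne s hs hψs

lemma exists_equiv_of_det_ne_zero [FiniteDimensional ℝ F] (f : F →L[ℝ] F) (h : f.det ≠ 0) :
    ∃ e : F ≃L[ℝ] F, (e : F →L[ℝ] F) = f := by
  set bas := Module.finBasis ℝ F with hbas
  have hdet : IsUnit (LinearMap.toMatrix bas bas (f : F →ₗ[ℝ] F)).det := by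
    rw [LinearMap.det_toMatrix]
    exact isUnit_iff_ne_zero.mpr h
  set e := LinearEquiv.ofIsUnitDet hdet with he
  refine ⟨e.toContinuousLinearEquiv, ?_⟩
  apply ContinuousLinearMap.ext
  intro v
  have h1 : (e.toContinuousLinearEquiv : F → F) = e := LinearEquiv.coe_toContinuousLinearEquiv' e
  have h2 : e v = (f : F →ₗ[ℝ] F) v := by
    rw [he]
    exact DFunLike.congr_fun (LinearEquiv.coe_ofIsUnitDet hdet) v
  calc (e.toContinuousLinearEquiv : F →L[ℝ] F) v = e v := by rw [← h1]; rfl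
    _ = f v := h2

lemma surj_of_det_ne_zero [FiniteDimensional ℝ F] (f : F →L[ℝ] F) (h : f.det ≠ 0) :
    Function.Surjective f := by
  obtain ⟨e, he⟩ := exists_equiv_of_det_ne_zero f h
  intro y
  exact ⟨e.symm y, by rw [← he]; simp⟩


end General


lemma det_expand {m : ℕ} (τ : ℝ) (N : Matrix (Fin m) (Fin m) ℝ) :
    ((1 : Matrix (Fin m) (Fin m) ℝ) + τ • N).det
      = ∑ σ : Equiv.Perm (Fin m), ∑ S ∈ Finset.univ.powerset,
          (((Equiv.Perm.sign σ : ℤ) : ℝ) * ∏ i ∈ S, (1 : Matrix (Fin m) (Fin m) ℝ) (σ i) i)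
            * (τ ^ (Finset.univ \ S).card * ∏ i ∈ Finset.univ \ S, N (σ i) i) := by
  rw [Matrix.det_apply']
  apply Finset.sum_congr rfl
  intro σ _
  have hentry : ∀ i : Fin m, ((1 : Matrix (Fin m) (Fin m) ℝ) + τ • N) (σ i) i
      = (1 : Matrix (Fin m) (Fin m) ℝ) (σ i) i + τ * N (σ i) i := by
    intro i
    simp [Matrix.add_apply, Matrix.smul_apply, smul_eq_mul]
  rw [Finset.prod_congr rfl (fun i _ => hentry i), Finset.prod_add, Finset.mul_sum]
  apply Finset.sum_congr rfl
  intro S _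
  have hprod : (∏ i ∈ Finset.univ \ S, (τ * N (σ i) i))
      = τ ^ (Finset.univ \ S).card * ∏ i ∈ Finset.univ \ S, N (σ i) i := by
    rw [Finset.prod_mul_distrib, Finset.prod_const]
  rw [hprod]
  ring


section Dim
variable {n : ℕ}
local notation "E" => EuclideanSpace ℝ (Fin n)



lemma contDiff_coord (i : Fin n) : ContDiff ℝ 1 (fun x : E => x i) := by
  have : (fun x : E => x i) =
      (ContinuousLinearMap.proj (R := ℝ) (φ := fun _ : Fin n => ℝ) i).comp
        (EuclideanSpace.equiv (Fin n) ℝ).toContinuousLinearMap := rfl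
  rw [this]; exact ContinuousLinearMap.contDiff _

lemma sw_approx (K : Set E) (hK : IsCompact K) (h : E → ℝ) (hh : Continuous h)
    {δ : ℝ} (hδ : 0 < δ) :
    ∃ g : E → ℝ, ContDiff ℝ 1 g ∧ ∀ x ∈ K, |g x - h x| ≤ δ := by
  haveI : CompactSpace K := isCompact_iff_compactSpace.mp hK
  set A : Subalgebra ℝ C(K, ℝ) := Algebra.adjoin ℝ
    (Set.range fun i : Fin n =>
      (ContinuousMap.mk (fun x : K => (x : E) i)
        (((contDiff_coord i).continuous).comp continuous_subtype_val))) with hA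
  have hsep : A.SeparatesPoints := by
    intro x y hxy
    have : ∃ i, (x : E) i ≠ (y : E) i := by
      by_contra hc
      push_neg at hc
      exact hxy (Subtype.ext (PiLp.ext hc))
    obtain ⟨i, hi⟩ := this
    refine ⟨_, ⟨(ContinuousMap.mk (fun x : K => (x : E) i)
        (((contDiff_coord i).continuous).comp continuous_subtype_val)), ?_, rfl⟩, hi⟩
    exact Algebra.subset_adjoin ⟨i, rfl⟩
  obtain ⟨g', hg'⟩ := ContinuousMap.exists_mem_subalgebra_near_continuous_of_separatesPoints
    A hsep (fun x : K => h x) (hh.comp continuous_subtype_val) δ hδ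
  have ext : ∀ p : C(K, ℝ), p ∈ A → ∃ G : E → ℝ, ContDiff ℝ 1 G ∧ ∀ x : K, G x = p x := by
    intro p hp
    induction hp using Algebra.adjoin_induction with
    | mem q hq =>
      obtain ⟨i, rfl⟩ := hq
      exact ⟨fun x => x i, contDiff_coord i, fun x => rfl⟩
    | algebraMap r => exact ⟨fun _ => r, contDiff_const, fun x => rfl⟩
    | add q1 q2 h1 h2 ih1 ih2 =>
      obtain ⟨G1, hG1, he1⟩ := ih1; obtain ⟨G2, hG2, he2⟩ := ih2
      exact ⟨G1 + G2, hG1.add hG2, fun x => by simp [he1 x, he2 x]⟩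
    | mul q1 q2 h1 h2 ih1 ih2 =>
      obtain ⟨G1, hG1, he1⟩ := ih1; obtain ⟨G2, hG2, he2⟩ := ih2
      exact ⟨G1 * G2, hG1.mul hG2, fun x => by simp [he1 x, he2 x]⟩
  obtain ⟨G, hG, hGe⟩ := ext g' g'.2
  refine ⟨G, hG, fun x hx => ?_⟩
  have := hg' ⟨x, hx⟩
  rw [← hGe ⟨x, hx⟩] at this
  simpa [Real.norm_eq_abs] using this.le

lemma smooth_approx (K : Set E) (hK : IsCompact K) (F : E → E) (hF : Continuous F)
    {ε : ℝ} (hε : 0 < ε) :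
    ∃ g : E → E, ContDiff ℝ 1 g ∧ ∀ x ∈ K, ‖g x - F x‖ ≤ ε := by
  set δ : ℝ := ε / (n + 1) with hδdef
  have hδ : 0 < δ := by positivity
  have hcomp : ∀ i : Fin n, Continuous fun x => F x i := by
    intro i
    exact (continuous_apply i).comp (((EuclideanSpace.equiv (Fin n) ℝ).continuous).comp hF)
  have H : ∀ i : Fin n, ∃ g : E → ℝ, ContDiff ℝ 1 g ∧ ∀ x ∈ K, |g x - F x i| ≤ δ :=
    fun i => sw_approx K hK _ (hcomp i) hδ
  choose gs hgs hgsb using H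
  refine ⟨fun x => (EuclideanSpace.equiv (Fin n) ℝ).symm (fun i => gs i x), ?_, ?_⟩
  · exact ((EuclideanSpace.equiv (Fin n) ℝ).symm.toContinuousLinearMap.contDiff).comp
      (contDiff_pi.mpr fun i => hgs i)
  · intro x hx
    have hnorm : ‖(EuclideanSpace.equiv (Fin n) ℝ).symm (fun i => gs i x) - F x‖
        = Real.sqrt (∑ i, ‖gs i x - F x i‖ ^ 2) := by
      rw [EuclideanSpace.norm_eq]
      congr 1
    rw [hnorm]
    have hsum : (∑ i, ‖gs i x - F x i‖ ^ 2) ≤ n * δ ^ 2 := by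
      calc (∑ i, ‖gs i x - F x i‖ ^ 2) ≤ ∑ _i : Fin n, δ ^ 2 := by
            refine Finset.sum_le_sum fun i _ => ?_
            have := hgsb i x hx
            have h2 : ‖gs i x - F x i‖ ≤ δ := by rwa [Real.norm_eq_abs]
            nlinarith [norm_nonneg (gs i x - F x i)]
        _ = n * δ ^ 2 := by simp [Finset.sum_const, nsmul_eq_mul]
    calc Real.sqrt (∑ i, ‖gs i x - F x i‖ ^ 2) ≤ Real.sqrt (n * δ ^ 2) :=
          Real.sqrt_le_sqrt hsum
      _ ≤ Real.sqrt (ε ^ 2) := by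
          apply Real.sqrt_le_sqrt
          rw [hδdef, div_pow, ← mul_div_assoc, div_le_iff₀ (by positivity)]
          nlinarith [sq_nonneg ε, Nat.cast_nonneg (α := ℝ) n,
            mul_nonneg (sq_nonneg ε) (Nat.cast_nonneg (α := ℝ) n),
            mul_nonneg (mul_nonneg (sq_nonneg ε) (Nat.cast_nonneg (α := ℝ) n))
              (Nat.cast_nonneg (α := ℝ) n)]
      _ = ε := Real.sqrt_sq hε.le





theorem retraction_exists (g : E → E) (hg : ContDiff ℝ 1 g)
    (hgb : ∀ x ∈ closedBall (0:E) 3, ‖g x‖ ≤ 5/4)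
    (hgfix : ∀ x ∈ closedBall (0:E) 3, x ≠ g x) :
    ∃ r : E → E, (∀ x ∈ ball (0:E) (201/100), ContDiffAt ℝ 1 r x) ∧
      (∀ x ∈ ball (0:E) (201/100), ‖r x‖ ^ 2 = 4) ∧
      (∀ x : E, ‖x‖ = 2 → r x = x) := by
  set u : E → E := fun x => x - g x with hu_def
  set a : E → ℝ := fun x => (inner ℝ x (u x) : ℝ) with ha_def
  set b : E → ℝ := fun x => ‖u x‖ ^ 2 with hb_def
  set c : E → ℝ := fun x => 4 - ‖x‖ ^ 2 with hc_def
  set d : E → ℝ := fun x => a x ^ 2 + b x * c x with hd_def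
  set t : E → ℝ := fun x => (-a x + Real.sqrt (d x)) / b x with ht_def
  set r : E → E := fun x => x + t x • u x with hr_def
  have hsub : ball (0:E) (201/100) ⊆ closedBall (0:E) 3 :=
    ball_subset_closedBall.trans (closedBall_subset_closedBall (by norm_num))
  have hu_ne : ∀ x ∈ ball (0:E) (201/100), u x ≠ 0 := fun x hx =>
    sub_ne_zero.mpr (fun h => hgfix x (hsub hx) h)
  have hb_pos : ∀ x ∈ ball (0:E) (201/100), 0 < b x := fun x hx =>
    pow_pos (norm_pos_iff.mpr (hu_ne x hx)) 2
  have ha_lb : ∀ x ∈ ball (0:E) (201/100), 2 ≤ ‖x‖ → (3:ℝ)/2 ≤ a x := by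
    intro x hx h2
    have hgx : ‖g x‖ ≤ 5/4 := hgb x (hsub hx)
    have hCS : (inner ℝ x (g x) : ℝ) ≤ ‖x‖ * ‖g x‖ := real_inner_le_norm x (g x)
    have hax : a x = ‖x‖ ^ 2 - (inner ℝ x (g x) : ℝ) := by
      simp only [ha_def, hu_def, inner_sub_right, real_inner_self_eq_norm_sq]
    have hx3 : ‖x‖ ≤ 3 := by
      have := hsub hx; rwa [mem_closedBall_zero_iff] at this
    nlinarith [norm_nonneg (g x)]
  have hd_pos : ∀ x ∈ ball (0:E) (201/100), 0 < d x := by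
    intro x hx
    have hxlt : ‖x‖ < 201/100 := by rwa [mem_ball_zero_iff] at hx
    rcases lt_or_ge ‖x‖ 2 with h2 | h2
    · have hc : 0 < c x := by simp only [hc_def]; nlinarith [norm_nonneg x]
      have := hb_pos x hx
      simp only [hd_def]
      nlinarith [sq_nonneg (a x)]
    · have ha := ha_lb x hx h2
      have hbu : ‖u x‖ ≤ 201/100 + 5/4 := by
        have : ‖u x‖ ≤ ‖x‖ + ‖g x‖ := norm_sub_le x (g x)
        have := hgb x (hsub hx)
        linarith
      have hb_ub : b x ≤ 11 := by
        simp only [hb_def]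
        nlinarith [norm_nonneg (u x)]
      have hc_lb : -(1:ℝ)/20 ≤ c x := by
        simp only [hc_def]; nlinarith [norm_nonneg x]
      have hc_ub : c x ≤ 0 := by simp only [hc_def]; nlinarith
      have hprod : 0 ≤ (11 - b x) * (-c x) :=
        mul_nonneg (by linarith) (by linarith)
      simp only [hd_def]
      clear_value u a b c d t r
      nlinarith [ha, hprod, hc_lb, hc_ub, hb_ub, sq_nonneg (a x - 3/2)]
  have key_t : ∀ x ∈ ball (0:E) (201/100), 2 * t x * a x + t x ^ 2 * b x = c x := by
    intro x hx
    exact quadroot (a x) (b x) (c x) (Real.sqrt (d x)) (t x) (hb_pos x hx).ne'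
      (by rw [Real.sq_sqrt (hd_pos x hx).le, hd_def]) rfl
  have hr_norm : ∀ x ∈ ball (0:E) (201/100), ‖r x‖ ^ 2 = 4 := by
    intro x hx
    have expand : ‖r x‖ ^ 2 = ‖x‖ ^ 2 + 2 * t x * a x + t x ^ 2 * b x := by
      simp only [hr_def]
      rw [norm_add_sq_real]
      rw [real_inner_smul_right, norm_smul, Real.norm_eq_abs, mul_pow, sq_abs]
      simp only [ha_def, hb_def]; ring
    rw [expand]
    have := key_t x hx
    simp only [hc_def] at this
    linarith
  refine ⟨r, ?_, hr_norm, ?_⟩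
  · intro x hx
    have hu_cd : ContDiff ℝ 1 u := contDiff_id.sub hg
    have ha_cd : ContDiff ℝ 1 a := ContDiff.inner ℝ contDiff_id hu_cd
    have hb_cd : ContDiff ℝ 1 b := by
      have := hu_cd.norm_sq (𝕜 := ℝ)
      exact this
    have hc_cd : ContDiff ℝ 1 c := contDiff_const.sub (contDiff_norm_sq ℝ)
    have hd_cd : ContDiff ℝ 1 d := by
      simp only [hd_def]
      exact (ha_cd.pow 2).add (hb_cd.mul hc_cd)
    have hsq : ContDiffAt ℝ 1 (fun y => Real.sqrt (d y)) x :=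
      (Real.contDiffAt_sqrt (hd_pos x hx).ne').comp x hd_cd.contDiffAt
    have ht_cd : ContDiffAt ℝ 1 t x := by
      refine ContDiffAt.div ?_ hb_cd.contDiffAt (hb_pos x hx).ne'
      exact (ha_cd.contDiffAt.neg).add hsq
    exact (contDiffAt_id.add (ht_cd.smul hu_cd.contDiffAt))
  · intro x hx2
    have hxball : x ∈ ball (0:E) (201/100) := by
      rw [mem_ball_zero_iff, hx2]; norm_num
    have hc0 : c x = 0 := by simp [hc_def, hx2]; norm_num
    have ha := ha_lb x hxball (by rw [hx2])
    have hd_eq : d x = a x ^ 2 := by simp [hd_def, hc0]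
    have ht0 : t x = 0 := by
      simp only [ht_def, hd_eq]
      rw [Real.sqrt_sq (by linarith)]
      simp
    simp [hr_def, ht0]





theorem no_retraction (r : E → E)
    (hr : ∀ x ∈ ball (0:E) (201/100), ContDiffAt ℝ 1 r x)
    (hrn : ∀ x ∈ ball (0:E) (201/100), ‖r x‖ ^ 2 = 4)
    (hrb : ∀ x : E, ‖x‖ = 2 → r x = x) : False := by
  set U : Set E := ball (0:E) (201/100) with hU_def
  set B : Set E := closedBall (0:E) 2 with hB_def
  have hUopen : IsOpen U := isOpen_ball
  have hBU : B ⊆ U := closedBall_subset_ball (by norm_num)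
  have hBcompact : IsCompact B := isCompact_closedBall 0 2
  have hBconv : Convex ℝ B := convex_closedBall 0 2
  have hBmeas : MeasurableSet B := measurableSet_closedBall
  have hdiff : ∀ x ∈ U, DifferentiableAt ℝ r x := fun x hx => (hr x hx).differentiableAt one_ne_zero
  -- the maps
  set Φ : E → E := fun y => r y - y with hΦ_def
  set A' : E → (E →L[ℝ] E) := fun x => fderiv ℝ r x - ContinuousLinearMap.id ℝ E with hA'_def
  have hΦd : ∀ x ∈ U, HasFDerivAt Φ (A' x) x := fun x hx =>
    ((hdiff x hx).hasFDerivAt).sub (hasFDerivAt_id x)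
  have hrcont : ContinuousOn r U := fun x hx => (hr x hx).continuousAt.continuousWithinAt
  have hA'cont : ContinuousOn A' U := by
    have h1 : ContinuousOn (fun x => fderiv ℝ r x) U :=
      ContDiffOn.continuousOn_fderiv_of_isOpen
        (fun x hx => (hr x hx).contDiffWithinAt) hUopen le_rfl
    exact h1.sub continuousOn_const
  -- bound on A'
  obtain ⟨C, hC⟩ := hBcompact.exists_bound_of_continuousOn (hA'cont.mono hBU)
  set C₀ : ℝ := max C 0 with hC₀_def
  have hC₀nn : 0 ≤ C₀ := le_max_right _ _
  have hC₀ : ∀ x ∈ B, ‖A' x‖ ≤ C₀ := fun x hx => (hC x hx).trans (le_max_left _ _)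
  set τ₀ : ℝ := 1 / (2 * (C₀ + 1)) with hτ₀_def
  have hτ₀pos : 0 < τ₀ := by positivity
  have hτ₀half : τ₀ ≤ 1/2 := by
    rw [hτ₀_def, div_le_div_iff₀ (by positivity) (by norm_num)]
    nlinarith
  -- norm of r on U
  have hrnorm : ∀ x ∈ U, ‖r x‖ = 2 := by
    intro x hx
    nlinarith [hrn x hx, norm_nonneg (r x)]
  -- derivative of f τ
  set D : ℝ → E → (E →L[ℝ] E) := fun τ x => ContinuousLinearMap.id ℝ E + τ • A' x with hD_def
  set f : ℝ → E → E := fun τ y => y + τ • Φ y with hf_def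
  have hfD : ∀ (τ : ℝ), ∀ x ∈ U, HasFDerivAt (f τ) (D τ x) x := fun τ x hx =>
    (hasFDerivAt_id x).add ((hΦd x hx).const_smul τ)
  -- determinant via matrices
  set m : ℕ := Module.finrank ℝ (EuclideanSpace ℝ (Fin n)) with hm_def
  set bas : Module.Basis (Fin m) ℝ (EuclideanSpace ℝ (Fin n)) := Module.finBasis ℝ _ with hbas_def
  set M : E → Matrix (Fin m) (Fin m) ℝ :=
    fun x => LinearMap.toMatrix bas bas ((A' x) : E →ₗ[ℝ] E) with hM_def
  have hdetM : ∀ (τ : ℝ) (x : E), (D τ x).det = ((1 : Matrix (Fin m) (Fin m) ℝ) + τ • M x).det := by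
    intro τ x
    have hcoe : ((D τ x : E →L[ℝ] E) : E →ₗ[ℝ] E)
        = (LinearMap.id : E →ₗ[ℝ] E) + τ • ((A' x) : E →ₗ[ℝ] E) := by
      ext v
      simp [hD_def]
    rw [ContinuousLinearMap.det, hcoe, ← LinearMap.det_toMatrix bas, map_add, _root_.map_smul,
      LinearMap.toMatrix_id]
  -- continuity of matrix entries
  have hMcont : ∀ i j : Fin m, ContinuousOn (fun x => M x i j) U := by
    intro i j
    have h1 : Continuous fun (T : E →L[ℝ] E) => bas.coord i (T (bas j)) := by
      have h2 : Continuous fun (T : E →L[ℝ] E) => T (bas j) :=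
        (ContinuousLinearMap.apply ℝ (EuclideanSpace ℝ (Fin n)) (bas j)).continuous
      exact (LinearMap.continuous_of_finiteDimensional (bas.coord i)).comp h2
    have h3 : ContinuousOn (fun x => bas.coord i ((A' x) (bas j))) U := h1.comp_continuousOn hA'cont
    apply h3.congr
    intro x _
    rw [hM_def]
    simp [LinearMap.toMatrix_apply, Module.Basis.coord_apply]
  -- the integrand pieces
  set G : Equiv.Perm (Fin m) → Finset (Fin m) → E → ℝ :=
    fun σ S x => ∏ i ∈ Finset.univ \ S, M x (σ i) i with hG_def
  have hGint : ∀ σ S, IntegrableOn (G σ S) B volume := by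
    intro σ S
    apply ContinuousOn.integrableOn_compact hBcompact
    apply continuousOn_finset_prod
    intro i _
    exact (hMcont (σ i) i).mono hBU
  -- the polynomial
  set q : Polynomial ℝ :=
    ∑ σ : Equiv.Perm (Fin m), ∑ S ∈ Finset.univ.powerset,
      Polynomial.C ((((Equiv.Perm.sign σ : ℤ) : ℝ)
          * ∏ i ∈ S, (1 : Matrix (Fin m) (Fin m) ℝ) (σ i) i) * ∫ x in B, G σ S x)
        * Polynomial.X ^ ((Finset.univ \ S).card) with hq_def
  have heval : ∀ τ : ℝ, (∫ x in B, (D τ x).det) = q.eval τ := by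
    intro τ
    have h1 : ∀ x ∈ B, (D τ x).det
        = ∑ σ : Equiv.Perm (Fin m), ∑ S ∈ Finset.univ.powerset,
          ((((Equiv.Perm.sign σ : ℤ) : ℝ) * ∏ i ∈ S, (1 : Matrix (Fin m) (Fin m) ℝ) (σ i) i)
            * (τ ^ (Finset.univ \ S).card * G σ S x)) := by
      intro x _
      rw [hdetM τ x, det_expand]
    rw [setIntegral_congr_fun hBmeas h1]
    rw [integral_finset_sum]
    · have h2 : ∀ σ : Equiv.Perm (Fin m),
          (∫ x in B, ∑ S ∈ Finset.univ.powerset,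
            ((((Equiv.Perm.sign σ : ℤ) : ℝ) * ∏ i ∈ S, (1 : Matrix (Fin m) (Fin m) ℝ) (σ i) i)
              * (τ ^ (Finset.univ \ S).card * G σ S x)))
          = ∑ S ∈ Finset.univ.powerset,
            ((((Equiv.Perm.sign σ : ℤ) : ℝ) * ∏ i ∈ S, (1 : Matrix (Fin m) (Fin m) ℝ) (σ i) i)
              * (τ ^ (Finset.univ \ S).card * ∫ x in B, G σ S x)) := by
        intro σ
        rw [integral_finset_sum]
        · apply Finset.sum_congr rfl
          intro S _
          rw [integral_const_mul, integral_const_mul]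
        · intro S _
          exact (((hGint σ S).const_mul _).const_mul _)
      rw [Finset.sum_congr rfl (fun σ _ => h2 σ)]
      rw [hq_def]
      simp only [Polynomial.eval_finset_sum, Polynomial.eval_mul, Polynomial.eval_C,
        Polynomial.eval_pow, Polynomial.eval_X]
      apply Finset.sum_congr rfl
      intro σ _
      apply Finset.sum_congr rfl
      intro S _
      ring
    · intro σ _
      apply integrable_finset_sum
      intro S _
      exact (((hGint σ S).const_mul _).const_mul _)
  -- volume of the ball
  set V : ℝ := (volume B).toReal with hV_def
  have hVpos : 0 < V := by
    rw [hV_def]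
    apply ENNReal.toReal_pos
    · refine ne_of_gt (lt_of_lt_of_le ?_ (measure_mono ball_subset_closedBall))
      exact measure_ball_pos volume 0 (by norm_num)
    · exact measure_closedBall_lt_top.ne
  -- the key identity for small τ
  have hkey : ∀ τ ∈ Icc (0:ℝ) τ₀, q.eval τ = V := by
    intro τ hτ
    obtain ⟨hτ0, hττ₀⟩ := hτ
    have hτhalf : τ ≤ 1/2 := hττ₀.trans hτ₀half
    have hτC : τ * C₀ ≤ 1/2 := by
      have h2 : τ * C₀ ≤ τ₀ * C₀ := mul_le_mul_of_nonneg_right hττ₀ hC₀nn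
      have h3 : τ₀ * C₀ ≤ 1/2 := by
        rw [hτ₀_def, div_mul_eq_mul_div, div_le_div_iff₀ (by positivity) (by norm_num)]
        nlinarith
      linarith
    have hwnorm : ∀ x ∈ B, ‖τ • A' x‖ < 1 := by
      intro x hx
      have h0 : ‖τ • A' x‖ = τ * ‖A' x‖ := by
        rw [norm_smul τ (A' x), Real.norm_eq_abs, abs_of_nonneg hτ0]
      have h1 : τ * ‖A' x‖ ≤ τ * C₀ := mul_le_mul_of_nonneg_left (hC₀ x hx) hτ0
      rw [h0]; linarith
    have hdet_pos : ∀ x ∈ B, 0 < (D τ x).det := fun x hx =>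
      det_one_add_pos (τ • A' x) (hwnorm x hx)
    -- injectivity on B
    have hinj : InjOn (f τ) B := by
      intro x hx y hy hxy
      have hmvt : ‖Φ y - Φ x‖ ≤ C₀ * ‖y - x‖ := by
        apply Convex.norm_image_sub_le_of_norm_fderiv_le
          (fun z hz => ((hΦd z (hBU hz)).differentiableAt)) ?_ hBconv hx hy
        intro z hz
        rw [(hΦd z (hBU hz)).fderiv]
        exact hC₀ z hz
      have h := hxy
      simp only [hf_def] at h
      have hxyeq : x - y = τ • Φ y - τ • Φ x := by
        calc x - y = (x + τ • Φ x) - τ • Φ x - y := by abel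
          _ = (y + τ • Φ y) - τ • Φ x - y := by rw [h]
          _ = τ • Φ y - τ • Φ x := by abel
      have hnorm2 : ‖x - y‖ ≤ τ * (C₀ * ‖y - x‖) := by
        rw [hxyeq, ← smul_sub, norm_smul, Real.norm_eq_abs, abs_of_nonneg hτ0]
        exact mul_le_mul_of_nonneg_left hmvt hτ0
      rw [norm_sub_rev y x] at hnorm2
      have hhalf : ‖x - y‖ ≤ (1/2) * ‖x - y‖ := by
        calc ‖x - y‖ ≤ (τ * C₀) * ‖x - y‖ := by rw [← mul_assoc] at hnorm2; exact hnorm2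
          _ ≤ (1/2) * ‖x - y‖ := mul_le_mul_of_nonneg_right hτC (norm_nonneg _)
      have : ‖x - y‖ ≤ 0 := by linarith
      have := le_antisymm this (norm_nonneg _)
      rwa [norm_eq_zero, sub_eq_zero] at this
    -- convex combination form
    have hconv : ∀ x : E, f τ x = (1-τ) • x + τ • r x := by
      intro x
      simp only [hf_def, hΦ_def]
      rw [smul_sub, sub_smul, one_smul]
      abel
    have hnbd : ∀ x : E, ‖f τ x‖ ≤ (1-τ) * ‖x‖ + τ * ‖r x‖ := by
      intro x
      rw [hconv]
      refine (norm_add_le _ _).trans ?_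
      rw [norm_smul, norm_smul, Real.norm_eq_abs, Real.norm_eq_abs,
        abs_of_nonneg (by linarith : (0:ℝ) ≤ 1 - τ), abs_of_nonneg hτ0]
    have hmapsto : ∀ x ∈ B, f τ x ∈ B := by
      intro x hx
      have hx2 : ‖x‖ ≤ 2 := mem_closedBall_zero_iff.mp hx
      have hr2 : ‖r x‖ = 2 := hrnorm x (hBU hx)
      rw [mem_closedBall_zero_iff]
      have := hnbd x
      nlinarith
    have hfix : ∀ x : E, ‖x‖ = 2 → f τ x = x := by
      intro x hx
      simp [hf_def, hΦ_def, hrb x hx]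
    have hint2 : ∀ x ∈ ball (0:E) 2, f τ x ∈ ball (0:E) 2 := by
      intro x hx
      have hx2 : ‖x‖ < 2 := mem_ball_zero_iff.mp hx
      have hxB : x ∈ B := ball_subset_closedBall hx
      have hr2 : ‖r x‖ = 2 := hrnorm x (hBU hxB)
      rw [mem_ball_zero_iff]
      have := hnbd x
      nlinarith
    -- openness of the image of the open ball
    have hopen : IsOpen (f τ '' ball (0:E) 2) := by
      rw [isOpen_iff_mem_nhds]
      rintro y ⟨x, hx, rfl⟩
      have hxU : x ∈ U := hBU (ball_subset_closedBall hx)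
      have hcd : ContDiffAt ℝ 1 (f τ) x :=
        contDiffAt_id.add (((hr x hxU).sub contDiffAt_id).const_smul τ)
      have hstrict : HasStrictFDerivAt (f τ) (D τ x) x :=
        hcd.hasStrictFDerivAt' (hfD τ x hxU) one_ne_zero
      obtain ⟨e, he⟩ := exists_equiv_of_det_ne_zero (D τ x)
        (hdet_pos x (ball_subset_closedBall hx)).ne'
      have hstrict' : HasStrictFDerivAt (f τ) (e : E →L[ℝ] E) x := by
        rw [he]; exact hstrict
      have hmap := hstrict'.map_nhds_eq_of_equiv
      rw [← hmap]
      exact Filter.image_mem_map (isOpen_ball.mem_nhds hx)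
    -- the image equals B
    have hfcont : ContinuousOn (f τ) B :=
      continuousOn_id.add (((hrcont.mono hBU).sub continuousOn_id).const_smul τ)
    have himgcompact : IsCompact (f τ '' B) := hBcompact.image_of_continuousOn hfcont
    have hclin : closure (f τ '' ball (0:E) 2) ∩ ball (0:E) 2 ⊆ f τ '' ball (0:E) 2 := by
      rintro z ⟨hzc, hzb⟩
      have hz' : z ∈ f τ '' B := by
        have hsub : closure (f τ '' ball (0:E) 2) ⊆ f τ '' B :=
          closure_minimal (image_mono ball_subset_closedBall) himgcompact.isClosed
        exact hsub hzc
      obtain ⟨x, hxB, rfl⟩ := hz'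
      rcases eq_or_lt_of_le (mem_closedBall_zero_iff.mp hxB) with h2 | h2
      · exfalso
        rw [hfix x h2, mem_ball_zero_iff, h2] at hzb
        exact lt_irrefl _ hzb
      · exact mem_image_of_mem _ (mem_ball_zero_iff.mpr h2)
    have h0ball : (0:E) ∈ ball (0:E) 2 := by
      rw [mem_ball_zero_iff, norm_zero]; norm_num
    have hball_sub : ball (0:E) 2 ⊆ f τ '' ball (0:E) 2 := by
      apply IsPreconnected.subset_of_closure_inter_subset
        (convex_ball (0:E) 2).isPreconnected hopen
      · exact ⟨f τ 0, hint2 0 h0ball, mem_image_of_mem _ h0ball⟩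
      · exact hclin
    have himg : f τ '' B = B := by
      apply Set.Subset.antisymm
      · exact image_subset_iff.mpr fun x hx => hmapsto x hx
      · intro y hy
        rcases eq_or_lt_of_le (mem_closedBall_zero_iff.mp hy) with h2 | h2
        · exact ⟨y, hy, hfix y h2⟩
        · obtain ⟨x, hx, hfx⟩ := hball_sub (mem_ball_zero_iff.mpr h2)
          exact ⟨x, ball_subset_closedBall hx, hfx⟩
    -- the change of variables
    have hlint := lintegral_image_eq_lintegral_abs_det_fderiv_mul volume hBmeas
        (fun x hx => (hfD τ x (hBU hx)).hasFDerivWithinAt) hinj (fun _ => (1:ENNReal))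
    rw [himg] at hlint
    simp only [setLIntegral_one, mul_one] at hlint
    have habs : ∀ x ∈ B, ENNReal.ofReal |(D τ x).det| = ENNReal.ofReal ((D τ x).det) := by
      intro x hx
      rw [abs_of_pos (hdet_pos x hx)]
    rw [setLIntegral_congr_fun hBmeas habs] at hlint
    have hIntD : IntegrableOn (fun x => (D τ x).det) B volume := by
      apply ContinuousOn.integrableOn_compact hBcompact
      apply ContinuousLinearMap.continuous_det.comp_continuousOn
      exact continuousOn_const.add ((hA'cont.mono hBU).const_smul τ)
    have hnn : 0 ≤ᵐ[volume.restrict B] fun x => (D τ x).det :=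
      (ae_restrict_iff' hBmeas).mpr (Filter.Eventually.of_forall fun x hx => (hdet_pos x hx).le)
    have hof := ofReal_integral_eq_lintegral_ofReal hIntD hnn
    have hqnn : 0 ≤ ∫ x in B, (D τ x).det ∂volume :=
      setIntegral_nonneg hBmeas fun x hx => (hdet_pos x hx).le
    have hcomb : volume B = ENNReal.ofReal (∫ x in B, (D τ x).det ∂volume) := by
      rw [hof]; exact hlint
    have : V = ∫ x in B, (D τ x).det ∂volume := by
      rw [hV_def, hcomb, ENNReal.toReal_ofReal hqnn]
    rw [← heval τ, ← this]
  -- det (fderiv r) = 0 on B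
  have hzero : ∀ x ∈ B, (D (1:ℝ) x).det = 0 := by
    intro x hx
    have hxU := hBU hx
    have hD1 : D 1 x = fderiv ℝ r x := by
      simp only [hD_def, hA'_def, one_smul]
      abel
    rw [hD1]
    by_contra hne
    obtain ⟨v, hv⟩ := surj_of_det_ne_zero (fderiv ℝ r x) hne (r x)
    have hdrA : HasFDerivAt r (fderiv ℝ r x) x := (hdiff x hxU).hasFDerivAt
    have hFev : (fun y => (inner ℝ (r y) (r y) : ℝ)) =ᶠ[nhds x] (fun _ => (4:ℝ)) := by
      filter_upwards [hUopen.mem_nhds hxU] with y hy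
      rw [real_inner_self_eq_norm_sq, hrn y hy]
    have hF0 : HasFDerivAt (fun y => (inner ℝ (r y) (r y) : ℝ)) (0 : EuclideanSpace ℝ (Fin n) →L[ℝ] ℝ) x :=
      (hasFDerivAt_const (4:ℝ) x).congr_of_eventuallyEq hFev
    have hF1 := hdrA.inner ℝ hdrA
    have hEq := hF1.unique hF0
    have horth : (inner ℝ (r x) (r x) : ℝ) = 0 := by
      have hzero' := DFunLike.congr_fun hEq v
      simp only [ContinuousLinearMap.comp_apply, ContinuousLinearMap.prod_apply,
        fderivInnerCLM_apply, ContinuousLinearMap.zero_apply, hv] at hzero'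
      have hcomm : (inner ℝ (r x) (r x) : ℝ) = (inner ℝ (r x) (r x) : ℝ) := rfl
      linarith [hzero', real_inner_comm (r x) (r x)]
    rw [real_inner_self_eq_norm_sq] at horth
    have := hrn x hxU
    nlinarith
  have heval1 : q.eval 1 = 0 := by
    rw [← heval 1, setIntegral_congr_fun hBmeas hzero, integral_zero]
  have hqconst : q = Polynomial.C V := by
    have hinf : {τ : ℝ | (q - Polynomial.C V).IsRoot τ}.Infinite := by
      apply (Set.Icc_infinite hτ₀pos).mono
      intro τ hτ
      simp only [mem_setOf_eq, Polynomial.IsRoot, Polynomial.eval_sub, Polynomial.eval_C]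
      rw [hkey τ hτ]
      ring
    have h := Polynomial.eq_zero_of_infinite_isRoot _ hinf
    have := sub_eq_zero.mp h
    exact this
  rw [hqconst, Polynomial.eval_C] at heval1
  linarith





theorem brouwer_unit (f : E → E) (hf : Continuous f)
    (hmem : ∀ x : E, ‖x‖ ≤ 1 → ‖f x‖ ≤ 1) :
    ∃ x : E, ‖x‖ ≤ 1 ∧ f x = x := by
  by_contra hcon
  push_neg at hcon
  set π : E → E := fun x => (max 1 ‖x‖)⁻¹ • x with hπ_def
  have hmaxpos : ∀ x : E, (0:ℝ) < max 1 ‖x‖ := fun x =>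
    lt_of_lt_of_le one_pos (le_max_left _ _)
  have hπcont : Continuous π := by
    apply Continuous.fun_smul ?_ continuous_id
    exact (continuous_const.max continuous_norm).inv₀ (fun x => (hmaxpos x).ne')
  have hπmem : ∀ x : E, ‖π x‖ ≤ 1 := by
    intro x
    have h1 : ‖π x‖ = (max 1 ‖x‖)⁻¹ * ‖x‖ := by
      rw [hπ_def]
      have := norm_smul ((max 1 ‖x‖)⁻¹) x
      rw [this, Real.norm_eq_abs, abs_of_pos (inv_pos.mpr (hmaxpos x))]
    rw [h1, inv_mul_le_iff₀ (hmaxpos x), mul_one]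
    exact le_max_right _ _
  have hπid : ∀ x : E, ‖x‖ ≤ 1 → π x = x := by
    intro x hx
    rw [hπ_def]
    simp only [max_eq_left hx, inv_one, one_smul]
  set F : E → E := fun x => f (π x) with hF_def
  have hFcont : Continuous F := hf.comp hπcont
  have hFmem : ∀ x : E, ‖F x‖ ≤ 1 := fun x => hmem (π x) (hπmem x)
  have hFne : ∀ x : E, F x ≠ x := by
    intro x hx
    have h1 : ‖x‖ ≤ 1 := by rw [← hx]; exact hFmem x
    have h2 : π x = x := hπid x h1
    have h3 : f x = x := by
      calc f x = F x := by rw [hF_def]; simp [h2]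
        _ = x := hx
    exact hcon x h1 h3
  -- minimum distance
  have hKc : IsCompact (closedBall (0:E) 3) := isCompact_closedBall 0 3
  have hcont2 : ContinuousOn (fun x => ‖x - F x‖) (closedBall (0:E) 3) :=
    ((continuous_id.sub hFcont).norm).continuousOn
  obtain ⟨x₀, hx₀K, hx₀min⟩ := hKc.exists_isMinOn ⟨0, by simp⟩ hcont2
  set ε : ℝ := ‖x₀ - F x₀‖ with hε_def
  have hεpos : 0 < ε := by
    rw [hε_def, norm_pos_iff, sub_ne_zero]
    exact fun h => hFne x₀ h.symm
  set ε' : ℝ := min (ε/2) (1/4) with hε'_def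
  have hε'pos : 0 < ε' := lt_min (by linarith) (by norm_num)
  obtain ⟨g, hg, hgapprox⟩ := smooth_approx (closedBall (0:E) 3) hKc F hFcont hε'pos
  have hgb : ∀ x ∈ closedBall (0:E) 3, ‖g x‖ ≤ 5/4 := by
    intro x hx
    have h1 := hgapprox x hx
    have h2 := hFmem x
    have := norm_le_norm_add_norm_sub' (g x) (F x)
    have hε'le : ε' ≤ 1/4 := min_le_right _ _
    calc ‖g x‖ ≤ ‖F x‖ + ‖g x - F x‖ := by
          have := norm_add_le (F x) (g x - F x)
          simpa using this
      _ ≤ 1 + 1/4 := add_le_add h2 (h1.trans hε'le)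
      _ = 5/4 := by norm_num
  have hgfix : ∀ x ∈ closedBall (0:E) 3, x ≠ g x := by
    intro x hx heq
    have h1 := hgapprox x hx
    have h2 : ε ≤ ‖x - F x‖ := hx₀min hx
    have h3 : ‖x - F x‖ = ‖g x - F x‖ := by rw [← heq]
    have hε'le : ε' ≤ ε/2 := min_le_left _ _
    rw [h3] at h2
    linarith
  obtain ⟨r, hr1, hr2, hr3⟩ := retraction_exists g hg hgb hgfix
  exact no_retraction r hr1 hr2 hr3

theorem brouwer_ball {R : ℝ} (hR : 0 < R) (f : E → E) (hf : Continuous f)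
    (hmem : ∀ x : E, ‖x‖ ≤ R → ‖f x‖ ≤ R) :
    ∃ x : E, ‖x‖ ≤ R ∧ f x = x := by
  set f' : E → E := fun y => R⁻¹ • f (R • y) with hf'_def
  have hf'cont : Continuous f' := (continuous_const.fun_smul (hf.comp (continuous_const.fun_smul continuous_id)))
  have hf'mem : ∀ y : E, ‖y‖ ≤ 1 → ‖f' y‖ ≤ 1 := by
    intro y hy
    have h1 : ‖R • y‖ ≤ R := by
      have := norm_smul R y
      rw [this, Real.norm_eq_abs, abs_of_pos hR]
      nlinarith [norm_nonneg y]
    have h2 := hmem _ h1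
    have h3 : ‖f' y‖ = R⁻¹ * ‖f (R • y)‖ := by
      rw [hf'_def]
      have := norm_smul R⁻¹ (f (R • y))
      rw [this, Real.norm_eq_abs, abs_of_pos (inv_pos.mpr hR)]
    rw [h3, inv_mul_le_iff₀ hR, mul_one]
    exact h2
  obtain ⟨y, hy1, hy2⟩ := brouwer_unit f' hf'cont hf'mem
  refine ⟨R • y, ?_, ?_⟩
  · have := norm_smul R y
    rw [this, Real.norm_eq_abs, abs_of_pos hR]
    nlinarith [norm_nonneg y]
  · have h4 : R • f' y = R • y := by rw [hy2]
    rw [hf'_def] at h4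
    simp only [smul_smul] at h4
    rw [mul_inv_cancel₀ hR.ne', one_smul] at h4
    exact h4


end Dim

end Stmt16

end

/-- Brouwer fixed-point step: if `T` is continuous and order-reversing (coordinatewise) and
`λ* ≥ 0` satisfies `T(λ*) ≤ √n λ*` and `T(√n λ*) = λ*`, then `T` has a fixed point in the box
`[λ*, √n λ*]`. -/
theorem stmt_16 {n : ℕ} (hn : 1 ≤ n) (T : (Fin n → ℝ) → (Fin n → ℝ))
    (hcont : Continuous T)
    (hanti : ∀ lam mu : Fin n → ℝ, lam ≤ mu → T mu ≤ T lam)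
    (lamstar : Fin n → ℝ) (hpos : 0 ≤ lamstar)
    (hup : T lamstar ≤ Real.sqrt n • lamstar)
    (hlow : T (Real.sqrt n • lamstar) = lamstar) :
    ∃ lam' : Fin n → ℝ, T lam' = lam' ∧ lamstar ≤ lam' ∧ lam' ≤ Real.sqrt n • lamstar := by


  classical
  set s : Fin n → ℝ := Real.sqrt n • lamstar with hs_def
  have hsqrt1 : (1:ℝ) ≤ Real.sqrt n := Real.one_le_sqrt.mpr (by exact_mod_cast hn)
  have hls : lamstar ≤ s := by
    intro i
    have h0 : (0:ℝ) ≤ lamstar i := by simpa using hpos i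
    have h1 : lamstar i ≤ Real.sqrt n * lamstar i := by nlinarith
    show lamstar i ≤ s i
    rw [hs_def]
    simpa [Pi.smul_apply, smul_eq_mul] using h1
  have hTs : T s = lamstar := by rw [hs_def]; exact hlow
  have hTbox : ∀ x : Fin n → ℝ, lamstar ≤ x → x ≤ s → lamstar ≤ T x ∧ T x ≤ s := by
    intro x h1 h2
    constructor
    · have h3 := hanti x s h2
      rw [hTs] at h3
      exact h3
    · exact (hanti lamstar x h1).trans hup
  set clamp : (Fin n → ℝ) → (Fin n → ℝ) := fun x i => max (lamstar i) (min (s i) (x i))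
    with hclamp_def
  have hclamp_cont : Continuous clamp := by
    apply continuous_pi
    intro i
    exact (continuous_const.max ((continuous_const.min (continuous_apply i)).comp continuous_id))
  have hclamp_lb : ∀ x, lamstar ≤ clamp x := fun x i => le_max_left _ _
  have hclamp_ub : ∀ x, clamp x ≤ s := fun x i => max_le (hls i) (min_le_left _ _)
  have hclamp_id : ∀ x, lamstar ≤ x → x ≤ s → clamp x = x := by
    intro x h1 h2
    funext i
    rw [hclamp_def]
    simp only
    rw [min_eq_right (h2 i), max_eq_right (h1 i)]
  set G : (Fin n → ℝ) → (Fin n → ℝ) := fun x => T (clamp x) with hG_def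
  have hGcont : Continuous G := hcont.comp hclamp_cont
  have hGbox : ∀ x, lamstar ≤ G x ∧ G x ≤ s := fun x =>
    hTbox (clamp x) (hclamp_lb x) (hclamp_ub x)
  set e := EuclideanSpace.equiv (Fin n) ℝ with he_def
  set R : ℝ := 1 + Real.sqrt (∑ i, (s i)^2) with hR_def
  have hRpos : 0 < R := by positivity
  have hnormbox : ∀ x : Fin n → ℝ, lamstar ≤ x → x ≤ s →
      ‖(e.symm x : EuclideanSpace ℝ (Fin n))‖ ≤ R := by
    intro x h1 h2
    rw [EuclideanSpace.norm_eq]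
    have hbound : ∀ i, ‖(e.symm x : EuclideanSpace ℝ (Fin n)) i‖^2 ≤ (s i)^2 := by
      intro i
      have hxi : (e.symm x : EuclideanSpace ℝ (Fin n)) i = x i := rfl
      rw [hxi, Real.norm_eq_abs, sq_abs]
      have h0 : 0 ≤ x i := le_trans (by simpa using hpos i) (h1 i)
      nlinarith [h1 i, h2 i, hpos i]
    calc Real.sqrt (∑ i, ‖(e.symm x : EuclideanSpace ℝ (Fin n)) i‖^2)
        ≤ Real.sqrt (∑ i, (s i)^2) :=
          Real.sqrt_le_sqrt (Finset.sum_le_sum (fun i _ => hbound i))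
      _ ≤ R := by rw [hR_def]; linarith
  set F : EuclideanSpace ℝ (Fin n) → EuclideanSpace ℝ (Fin n) :=
    fun y => e.symm (G (e y)) with hF_def
  have hFcont : Continuous F := (e.symm.continuous).comp (hGcont.comp e.continuous)
  have hFmem : ∀ y : EuclideanSpace ℝ (Fin n), ‖y‖ ≤ R → ‖F y‖ ≤ R := fun y _ =>
    hnormbox _ (hGbox (e y)).1 (hGbox (e y)).2
  obtain ⟨y, hy1, hy2⟩ := Stmt16.brouwer_ball hRpos F hFcont hFmem
  set x : Fin n → ℝ := e y with hx_def
  have hx : G x = x := by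
    have h5 := congrArg e hy2
    rw [hF_def] at h5
    simpa using h5
  have hxlb : lamstar ≤ x := by
    have := (hGbox x).1
    rwa [hx] at this
  have hxub : x ≤ s := by
    have := (hGbox x).2
    rwa [hx] at this
  have hclampx : clamp x = x := hclamp_id x hxlb hxub
  have hTx : T x = x := by
    have h6 : G x = T (clamp x) := rfl
    rw [h6, hclampx] at hx
    exact hx
  exact ⟨x, hTx, hxlb, hxub⟩
end
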